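/- Let n ≥ 1 and r > 0 with 2·r·n = 1 (exact covering, excess zero). Then Cov_I(n,r) is exactly the set of n! configurations obtained by permuting the evenly spaced centers r, 3r, …, (2n−1)r: namely Cov_I(n,r) = { x : Fin n → ℝ | ∃ σ ∈ Equiv.Perm (Fin n), ∀ i, x i = (2·(σ i : ℕ) + 1)·r }. In particular Cov_I(n,r) is a finite set with exactly n! elements. -/

import Mathlib

/-- The covering configuration space of `n` labelled radius-`r` intervals on `[0,1]`. -/
def CovI (n : ℕ) (r : ℝ) : Set (Fin n → ℝ) :=
  {x | (∀ i, Set.Icc (x i - r) (x i + r) ⊆ Set.Icc 0 1) ∧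
    Set.Icc (0 : ℝ) 1 ⊆ ⋃ i, Set.Icc (x i - r) (x i + r)}

theorem covI_exact_covering (n : ℕ) (hn : 1 ≤ n) (r : ℝ) (hr : 0 < r)
    (hex : 2 * r * n = 1) :
    CovI n r = {x : Fin n → ℝ | ∃ σ : Equiv.Perm (Fin n),
        ∀ i, x i = (2 * ((σ i : ℕ) : ℝ) + 1) * r} ∧
      (CovI n r).Finite ∧ (CovI n r).ncard = n.factorial := by
  have hset : CovI n r = {x : Fin n → ℝ | ∃ σ : Equiv.Perm (Fin n),
      ∀ i, x i = (2 * ((σ i : ℕ) : ℝ) + 1) * r} := by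
    ext x
    constructor
    · rintro ⟨hcont, hcov⟩
      set τ := Tuple.sort x with hτ
      set y : Fin n → ℝ := x ∘ τ with hy
      have hmono : Monotone y := Tuple.monotone_sort x
      have hconty : ∀ i, Set.Icc (y i - r) (y i + r) ⊆ Set.Icc (0:ℝ) 1 := fun i => hcont (τ i)
      have hcovy : ∀ t : ℝ, 0 ≤ t → t ≤ 1 → ∃ j, y j - r ≤ t ∧ t ≤ y j + r := by
        intro t h0 h1
        obtain ⟨i, hi⟩ := Set.mem_iUnion.mp (hcov ⟨h0, h1⟩)
        refine ⟨τ⁻¹ i, ?_, ?_⟩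
        · simpa [hy, Equiv.Perm.inv_def, Equiv.apply_symm_apply] using hi.1
        · simpa [hy, Equiv.Perm.inv_def, Equiv.apply_symm_apply] using hi.2
      have hlo : ∀ i, 0 ≤ y i - r := fun i => (hconty i ⟨le_refl _, by linarith⟩).1
      have hhi : ∀ i, y i + r ≤ 1 := fun i => (hconty i ⟨by linarith, le_refl _⟩).2
      -- upper bound step
      have step_up : ∀ k : Fin n,
          (∀ j : Fin n, (j:ℕ) < (k:ℕ) → y j ≤ (2*((j:ℕ):ℝ)+1)*r) →
          y k ≤ (2*((k:ℕ):ℝ)+1)*r := by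
        intro k h
        by_contra hlt
        push_neg at hlt
        have h1 : 2*((k:ℕ):ℝ)*r < y k - r := by nlinarith
        set t := (2*((k:ℕ):ℝ)*r + (y k - r))/2 with ht
        have hk0 : (0:ℝ) ≤ 2*((k:ℕ):ℝ)*r := by positivity
        have ht1 : 2*((k:ℕ):ℝ)*r < t := by rw [ht]; linarith
        have ht2 : t < y k - r := by rw [ht]; linarith
        have ht0 : 0 ≤ t := le_of_lt (lt_of_le_of_lt hk0 ht1)
        have htle : t ≤ 1 := by
          have := hhi k; linarith
        obtain ⟨j, hj1, hj2⟩ := hcovy t ht0 htle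
        rcases lt_or_ge ((j:ℕ)) ((k:ℕ)) with hjk | hjk
        · have hyj := h j hjk
          have hcast : ((j:ℕ):ℝ) + 1 ≤ ((k:ℕ):ℝ) := by exact_mod_cast hjk
          nlinarith
        · have : y k ≤ y j := hmono (by exact hjk)
          linarith
      -- lower bound step
      have step_dn : ∀ k : Fin n,
          (∀ j : Fin n, (k:ℕ) < (j:ℕ) → (2*((j:ℕ):ℝ)+1)*r ≤ y j) →
          (2*((k:ℕ):ℝ)+1)*r ≤ y k := by
        intro k h
        by_contra hlt
        push_neg at hlt
        have h1 : y k + r < (2*((k:ℕ):ℝ)+2)*r := by nlinarith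
        set t := (y k + r + (2*((k:ℕ):ℝ)+2)*r)/2 with ht
        have ht1 : y k + r < t := by rw [ht]; linarith
        have ht2 : t < (2*((k:ℕ):ℝ)+2)*r := by rw [ht]; linarith
        have ht0 : 0 ≤ t := by
          have := hlo k; linarith
        have hkn : ((k:ℕ):ℝ) + 1 ≤ (n:ℝ) := by exact_mod_cast k.isLt
        have htle : t ≤ 1 := by nlinarith
        obtain ⟨j, hj1, hj2⟩ := hcovy t ht0 htle
        rcases lt_or_ge ((k:ℕ)) ((j:ℕ)) with hjk | hjk
        · have hyj := h j hjk
          have hcast : ((k:ℕ):ℝ) + 1 ≤ ((j:ℕ):ℝ) := by exact_mod_cast hjk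
          nlinarith
        · have : y j ≤ y k := hmono (by exact hjk)
          linarith
      have upper : ∀ k : Fin n, y k ≤ (2*((k:ℕ):ℝ)+1)*r := by
        have key : ∀ m : ℕ, ∀ k : Fin n, (k:ℕ) < m → y k ≤ (2*((k:ℕ):ℝ)+1)*r := by
          intro m
          induction m with
          | zero => intro k hk; exact absurd hk (Nat.not_lt_zero _)
          | succ m ih => intro k hk; exact step_up k (fun j hj => ih j (by omega))
        intro k; exact key n k k.isLt
      have lower : ∀ k : Fin n, (2*((k:ℕ):ℝ)+1)*r ≤ y k := by
        have key : ∀ m : ℕ, ∀ k : Fin n, n - (k:ℕ) ≤ m → (2*((k:ℕ):ℝ)+1)*r ≤ y k := by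
          intro m
          induction m with
          | zero =>
            intro k hk
            exact absurd hk (by have := k.isLt; omega)
          | succ m ih =>
            intro k hk
            exact step_dn k (fun j hj => ih j (by have := j.isLt; omega))
        intro k; exact key n k (Nat.sub_le _ _)
      have heq : ∀ k : Fin n, y k = (2*((k:ℕ):ℝ)+1)*r :=
        fun k => le_antisymm (upper k) (lower k)
      refine ⟨τ⁻¹, fun i => ?_⟩
      have := heq (τ⁻¹ i)
      simpa [hy, Equiv.Perm.inv_def, Equiv.apply_symm_apply] using this
    · rintro ⟨σ, hx⟩
      constructor
      · intro i u hu
        rw [hx i] at hu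
        obtain ⟨h1, h2⟩ := hu
        have hc0 : (0:ℝ) ≤ ((σ i : ℕ):ℝ) := Nat.cast_nonneg _
        have hc1 : ((σ i : ℕ):ℝ) + 1 ≤ (n:ℝ) := by exact_mod_cast (σ i).isLt
        constructor
        · nlinarith
        · nlinarith
      · intro t ht
        obtain ⟨h0, h1⟩ := ht
        set k : ℕ := min (n-1) ⌊t/(2*r)⌋₊ with hk
        have h2r : (0:ℝ) < 2*r := by linarith
        have hfl : (⌊t/(2*r)⌋₊ : ℝ) ≤ t/(2*r) := Nat.floor_le (by positivity)
        have hkk : (k:ℝ) ≤ t/(2*r) := by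
          calc (k:ℝ) ≤ (⌊t/(2*r)⌋₊ : ℝ) := by exact_mod_cast min_le_right _ _
          _ ≤ t/(2*r) := hfl
        have hklo : 2*(k:ℝ)*r ≤ t := by
          have h := (le_div_iff₀ h2r).mp hkk
          nlinarith
        have hkhi : t ≤ 2*((k:ℝ)+1)*r := by
          rcases le_or_gt (⌊t/(2*r)⌋₊) (n-1) with hc | hc
          · have hke : k = ⌊t/(2*r)⌋₊ := min_eq_right hc
            have := Nat.lt_floor_add_one (t/(2*r))
            have h' : t/(2*r) < (k:ℝ) + 1 := by rw [hke]; exact_mod_cast this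
            have h2 := (div_lt_iff₀ h2r).mp h'
            nlinarith
          · have hke : k = n - 1 := min_eq_left (le_of_lt hc)
            have hcast : ((n-1:ℕ):ℝ) = (n:ℝ) - 1 := by
              rw [Nat.cast_sub hn]; simp
            have : (k:ℝ) + 1 = (n:ℝ) := by rw [hke, hcast]; ring
            rw [this]; nlinarith
        have hkn : k < n := by
          have : k ≤ n - 1 := min_le_left _ _
          omega
        refine Set.mem_iUnion.mpr ⟨σ⁻¹ ⟨k, hkn⟩, ?_, ?_⟩
        · rw [hx]
          simp only [Equiv.Perm.inv_def, Equiv.apply_symm_apply]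
          nlinarith
        · rw [hx]
          simp only [Equiv.Perm.inv_def, Equiv.apply_symm_apply]
          nlinarith
  refine ⟨hset, ?_, ?_⟩
  all_goals {
    rw [hset]
    have hrange : {x : Fin n → ℝ | ∃ σ : Equiv.Perm (Fin n),
        ∀ i, x i = (2 * ((σ i : ℕ) : ℝ) + 1) * r}
        = Set.range (fun σ : Equiv.Perm (Fin n) =>
            fun i : Fin n => (2 * ((σ i : ℕ) : ℝ) + 1) * r) := by
      ext x
      constructor
      · rintro ⟨σ, h⟩; exact ⟨σ, (funext fun i => (h i).symm)⟩
      · rintro ⟨σ, rfl⟩; exact ⟨σ, fun i => rfl⟩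
    rw [hrange]
    first
    | exact Set.finite_range _
    | · have inj : Function.Injective (fun σ : Equiv.Perm (Fin n) =>
            fun i : Fin n => (2 * ((σ i : ℕ) : ℝ) + 1) * r) := by
          intro σ σ' hσ
          ext i
          have := congrFun hσ i
          simp only at this
          have h2 : ((σ i : ℕ):ℝ) = ((σ' i : ℕ):ℝ) := by
            have hr' : r ≠ 0 := ne_of_gt hr
            have h3 := mul_right_cancel₀ hr' this
            linarith
          exact_mod_cast h2
        have h1 := Nat.card_range_of_injective inj
        rw [Nat.card_coe_set_eq] at h1
        rw [h1, Nat.card_eq_fintype_card, Fintype.card_perm, Fintype.card_fin]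
  }
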